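/- Let p ≥ 0 and let (X,d) be a metric space. Then (X,d) has p-negative type if and only if (X,d) has generalized roundness p. -/

import Mathlib

open scoped BigOperators

/-- The kernel `d(x,y)^p`, with the convention that it vanishes on the diagonal
(this matters only when `p = 0`). -/
noncomputable def negKer {X : Type*} [MetricSpace X] (p : ℝ) (x y : X) : ℝ :=
  @ite ℝ (x = y) (Classical.dec _) 0 (dist x y ^ p)

/-- `(X,d)` has `p`-negative type: for all `k ≥ 2`, pairwise distinct points
`x₁,…,x_k` and reals `η₁,…,η_k` summing to zero,
`∑_{i,j} d(xᵢ,xⱼ)^p ηᵢ ηⱼ ≤ 0`. -/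
def HasNegType (X : Type*) [MetricSpace X] (p : ℝ) : Prop :=
  ∀ (k : ℕ), 2 ≤ k → ∀ (x : Fin k → X), Function.Injective x →
    ∀ (η : Fin k → ℝ), (∑ i, η i) = 0 →
      (∑ i, ∑ j, negKer p (x i) (x j) * η i * η j) ≤ 0

/-- `(X,d)` has strict `p`-negative type: `p`-negative type, with strict
inequality whenever `η ≠ 0`. -/
def HasStrictNegType (X : Type*) [MetricSpace X] (p : ℝ) : Prop :=
  HasNegType X p ∧
  ∀ (k : ℕ), 2 ≤ k → ∀ (x : Fin k → X), Function.Injective x →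
    ∀ (η : Fin k → ℝ), (∑ i, η i) = 0 → η ≠ 0 →
      (∑ i, ∑ j, negKer p (x i) (x j) * η i * η j) < 0

/-- A normalized `(s,t)`-simplex in `X`: `s+t` pairwise distinct points
`a₁,…,a_s,b₁,…,b_t` with positive weights `m`, `n`, each family summing to `1`. -/
structure IsNormSimplex {X : Type*} [MetricSpace X] {s t : ℕ}
    (a : Fin s → X) (b : Fin t → X) (m : Fin s → ℝ) (n : Fin t → ℝ) : Prop where
  inj_a : Function.Injective a
  inj_b : Function.Injective b
  disj : ∀ j i, a j ≠ b i
  m_pos : ∀ j, 0 < m j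
  n_pos : ∀ i, 0 < n i
  m_sum : (∑ j, m j) = 1
  n_sum : (∑ i, n i) = 1

/-- The `p`-negative type simplex gap `γ_D^p(ω)` of a loaded `(s,t)`-simplex. -/
noncomputable def simplexGap {X : Type*} [MetricSpace X] (p : ℝ) {s t : ℕ}
    (a : Fin s → X) (b : Fin t → X) (m : Fin s → ℝ) (n : Fin t → ℝ) : ℝ :=
  (∑ j, ∑ i, m j * n i * dist (a j) (b i) ^ p)
    - (∑ j₁, ∑ j₂, if j₁ < j₂ then m j₁ * m j₂ * dist (a j₁) (a j₂) ^ p else 0)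
    - (∑ i₁, ∑ i₂, if i₁ < i₂ then n i₁ * n i₂ * dist (b i₁) (b i₂) ^ p else 0)

/-- `(X,d)` has generalized roundness `p`. -/
def HasGenRoundness (X : Type*) [MetricSpace X] (p : ℝ) : Prop :=
  ∀ (s t : ℕ) (a : Fin s → X) (b : Fin t → X) (m : Fin s → ℝ) (n : Fin t → ℝ),
    IsNormSimplex a b m n → 0 ≤ simplexGap p a b m n

lemma negKer_self {X : Type*} [MetricSpace X] (p : ℝ) (x : X) : negKer p x x = 0 := by
  simp [negKer]

lemma negKer_ne {X : Type*} [MetricSpace X] (p : ℝ) {x y : X} (h : x ≠ y) :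
    negKer p x y = dist x y ^ p := by
  simp [negKer, h]

lemma negKer_comm {X : Type*} [MetricSpace X] (p : ℝ) (x y : X) :
    negKer p x y = negKer p y x := by
  by_cases h : x = y
  · subst h; rfl
  · rw [negKer_ne p h, negKer_ne p (Ne.symm h), dist_comm]

lemma offdiag_half {k : ℕ} (F : Fin k → Fin k → ℝ) (hsym : ∀ i j, F i j = F j i)
    (hdiag : ∀ i, F i i = 0) :
    ∑ i, ∑ j, F i j = 2 * ∑ i, ∑ j, (if i < j then F i j else 0) := by
  have h1 : ∀ i j : Fin k, F i j =
      (if i < j then F i j else 0) + (if j < i then F i j else 0) := by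
    intro i j
    rcases lt_trichotomy i j with h | h | h
    · simp [h, asymm h]
    · subst h; simp [hdiag, lt_irrefl]
    · simp [h, asymm h, not_lt_of_gt h]
  have h2 : (∑ i, ∑ j, if j < i then F i j else 0)
      = ∑ i, ∑ j, if i < j then F i j else 0 := by
    rw [Finset.sum_comm]
    refine Finset.sum_congr rfl fun i _ => Finset.sum_congr rfl fun j _ => ?_
    by_cases h : i < j <;> simp [h, hsym]
  calc ∑ i, ∑ j, F i j
      = ∑ i, ∑ j, ((if i < j then F i j else 0) + (if j < i then F i j else 0)) := by
        simp_rw [← h1]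
    _ = (∑ i, ∑ j, if i < j then F i j else 0)
        + (∑ i, ∑ j, if j < i then F i j else 0) := by
        simp [Finset.sum_add_distrib]
    _ = 2 * ∑ i, ∑ j, if i < j then F i j else 0 := by rw [h2]; ring


lemma key_sum {X : Type*} [MetricSpace X] (p : ℝ) {s t : ℕ}
    (a : Fin s → X) (b : Fin t → X) (m : Fin s → ℝ) (n : Fin t → ℝ)
    (ha : Function.Injective a) (hb : Function.Injective b) (hd : ∀ j i, a j ≠ b i) :
    (∑ u : Fin s ⊕ Fin t, ∑ v : Fin s ⊕ Fin t,
      negKer p (Sum.elim a b u) (Sum.elim a b v)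
        * Sum.elim m (fun i => -n i) u * Sum.elim m (fun i => -n i) v)
      = -2 * simplexGap p a b m n := by
  have hAA : (∑ j1, ∑ j2, negKer p (a j1) (a j2) * m j1 * m j2)
      = 2 * ∑ j1, ∑ j2, (if j1 < j2 then m j1 * m j2 * dist (a j1) (a j2) ^ p else 0) := by
    rw [offdiag_half (fun j1 j2 => negKer p (a j1) (a j2) * m j1 * m j2)
      (fun i j => by (try dsimp only); rw [negKer_comm]; ring) (fun i => by (try dsimp only); rw [negKer_self]; ring)]
    congr 1
    refine Finset.sum_congr rfl fun j1 _ => Finset.sum_congr rfl fun j2 _ => ?_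
    by_cases h : j1 < j2
    · simp only [if_pos h]
      rw [negKer_ne p (fun hc => (ne_of_lt h) (ha hc))]; ring
    · simp [h]
  have hBB : (∑ i1, ∑ i2, negKer p (b i1) (b i2) * (-n i1) * (-n i2))
      = 2 * ∑ i1, ∑ i2, (if i1 < i2 then n i1 * n i2 * dist (b i1) (b i2) ^ p else 0) := by
    rw [offdiag_half (fun i1 i2 => negKer p (b i1) (b i2) * (-n i1) * (-n i2))
      (fun i j => by (try dsimp only); rw [negKer_comm]; ring) (fun i => by (try dsimp only); rw [negKer_self]; ring)]
    congr 1
    refine Finset.sum_congr rfl fun i1 _ => Finset.sum_congr rfl fun i2 _ => ?_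
    by_cases h : i1 < i2
    · simp only [if_pos h]
      rw [negKer_ne p (fun hc => (ne_of_lt h) (hb hc))]; ring
    · simp [h]
  have hAB : (∑ j, ∑ i, negKer p (a j) (b i) * m j * (-n i))
      = -(∑ j, ∑ i, m j * n i * dist (a j) (b i) ^ p) := by
    rw [← Finset.sum_neg_distrib]
    refine Finset.sum_congr rfl fun j _ => ?_
    rw [← Finset.sum_neg_distrib]
    refine Finset.sum_congr rfl fun i _ => ?_
    rw [negKer_ne p (hd j i)]; ring
  have hBA : (∑ i, ∑ j, negKer p (b i) (a j) * (-n i) * m j)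
      = -(∑ j, ∑ i, m j * n i * dist (a j) (b i) ^ p) := by
    rw [Finset.sum_comm, ← Finset.sum_neg_distrib]
    refine Finset.sum_congr rfl fun j _ => ?_
    rw [← Finset.sum_neg_distrib]
    refine Finset.sum_congr rfl fun i _ => ?_
    rw [negKer_comm, negKer_ne p (hd j i)]; ring
  rw [Fintype.sum_sum_type]
  simp only [Fintype.sum_sum_type, Sum.elim_inl, Sum.elim_inr]
  rw [Finset.sum_add_distrib, Finset.sum_add_distrib, hAA, hBB, hAB, hBA, simplexGap]
  ring

/-- A metric space has `p`-negative type iff it has generalized roundness `p`. -/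
theorem negType_iff_genRoundness {X : Type*} [MetricSpace X] (p : ℝ) (hp : 0 ≤ p) :
    HasNegType X p ↔ HasGenRoundness X p := by
  constructor
  · -- forward
    intro hNT s t a b m n hsx
    have hs : 0 < s := by
      rcases Nat.eq_zero_or_pos s with h | h
      · exfalso; have := hsx.m_sum; subst h; simp at this
      · exact h
    have ht : 0 < t := by
      rcases Nat.eq_zero_or_pos t with h | h
      · exfalso; have := hsx.n_sum; subst h; simp at this
      · exact h
    set E : Fin s ⊕ Fin t → X := Sum.elim a b with hE
    set w : Fin s ⊕ Fin t → ℝ := Sum.elim m (fun i => -n i) with hw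
    have hEinj : Function.Injective E := by
      intro u v h
      match u, v with
      | Sum.inl j, Sum.inl j' => exact congrArg Sum.inl (hsx.inj_a h)
      | Sum.inl j, Sum.inr i => exact absurd h (hsx.disj j i)
      | Sum.inr i, Sum.inl j => exact absurd h.symm (hsx.disj j i)
      | Sum.inr i, Sum.inr i' => exact congrArg Sum.inr (hsx.inj_b h)
    set e := finSumFinEquiv (m := s) (n := t) with he
    have h2 : 2 ≤ s + t := by omega
    have hxinj : Function.Injective (E ∘ e.symm) := hEinj.comp e.symm.injective
    have hsum : (∑ i, w (e.symm i)) = 0 := by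
      rw [Equiv.sum_comp e.symm w, Fintype.sum_sum_type]
      simp [hw, hsx.m_sum, hsx.n_sum]
    have hQ := hNT (s + t) h2 (E ∘ e.symm) hxinj (fun i => w (e.symm i)) hsum
    have heq : (∑ i, ∑ j, negKer p ((E ∘ e.symm) i) ((E ∘ e.symm) j)
          * (fun i => w (e.symm i)) i * (fun i => w (e.symm i)) j)
        = ∑ u, ∑ v, negKer p (E u) (E v) * w u * w v := by
      refine Fintype.sum_equiv e.symm _ _ fun i => ?_
      refine Fintype.sum_equiv e.symm _ _ fun j => ?_
      simp
    rw [heq, key_sum p a b m n hsx.inj_a hsx.inj_b hsx.disj] at hQ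
    linarith
  · -- reverse
    intro hGR k hk x hx η hη
    classical
    by_cases hall : ∀ i, η i = 0
    · simp [hall]
    · set P : Finset (Fin k) := Finset.univ.filter (fun i => 0 < η i) with hPdef
      set N : Finset (Fin k) := Finset.univ.filter (fun i => η i < 0) with hNdef
      have hPN : Disjoint P N := by
        rw [Finset.disjoint_left]
        intro i hiP hiN
        rw [hPdef, Finset.mem_filter] at hiP
        rw [hNdef, Finset.mem_filter] at hiN
        linarith [hiP.2, hiN.2]
      have hz : ∀ i, i ∉ P ∪ N → η i = 0 := by
        intro i hi
        rw [Finset.mem_union, hPdef, hNdef, Finset.mem_filter, Finset.mem_filter] at hi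
        push_neg at hi
        have h1 := hi.1 (Finset.mem_univ i)
        have h2 := hi.2 (Finset.mem_univ i)
        linarith
      set M : ℝ := ∑ i ∈ P, η i with hMdef
      have hPNsum : ∑ i ∈ P ∪ N, η i = 0 := by
        rw [← hη]
        exact Finset.sum_subset (Finset.subset_univ _) (fun i _ hi => hz i hi)
      have hNsum : ∑ i ∈ N, η i = -M := by
        rw [Finset.sum_union hPN] at hPNsum
        linarith
      have hMpos : 0 < M := by
        obtain ⟨i0, hi0⟩ := not_forall.mp hall
        have hPpos : ∀ i ∈ P, 0 < η i := fun i hi => (Finset.mem_filter.mp hi).2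
        rcases lt_or_gt_of_ne hi0 with h | h
        · have hi0N : i0 ∈ N := by rw [hNdef, Finset.mem_filter]; exact ⟨Finset.mem_univ _, h⟩
          have : ∑ i ∈ N, η i < 0 := by
            have := Finset.sum_lt_sum_of_nonempty ⟨i0, hi0N⟩
              (f := η) (g := fun _ => (0:ℝ)) (fun i hi => (Finset.mem_filter.mp hi).2)
            simpa using this
          linarith
        · exact Finset.sum_pos hPpos ⟨i0, by rw [hPdef, Finset.mem_filter]; exact ⟨Finset.mem_univ _, h⟩⟩
      set eP : ↥P ≃ Fin P.card := P.equivFin with hePdef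
      set eN : ↥N ≃ Fin N.card := N.equivFin with heNdef
      set a : Fin P.card → X := fun j => x ((eP.symm j) : Fin k) with hadef
      set b : Fin N.card → X := fun i => x ((eN.symm i) : Fin k) with hbdef
      set m : Fin P.card → ℝ := fun j => η ((eP.symm j) : Fin k) / M with hmdef
      set n : Fin N.card → ℝ := fun i => -η ((eN.symm i) : Fin k) / M with hndef
      have hmemP : ∀ j, 0 < η ((eP.symm j) : Fin k) :=
        fun j => (Finset.mem_filter.mp (eP.symm j).2).2
      have hmemN : ∀ i, η ((eN.symm i) : Fin k) < 0 :=
        fun i => (Finset.mem_filter.mp (eN.symm i).2).2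
      have hsx : IsNormSimplex a b m n := by
        refine ⟨?_, ?_, ?_, ?_, ?_, ?_, ?_⟩
        · exact fun j1 j2 h => eP.symm.injective (Subtype.ext (hx h))
        · exact fun i1 i2 h => eN.symm.injective (Subtype.ext (hx h))
        · intro j i h
          have hc := hx h
          have h1 := hmemP j
          have h2 := hmemN i
          rw [hc] at h1
          linarith
        · exact fun j => div_pos (hmemP j) hMpos
        · exact fun i => div_pos (by linarith [hmemN i]) hMpos
        · rw [hmdef, ← Finset.sum_div]
          rw [Equiv.sum_comp eP.symm (fun i : ↥P => η ↑i), Finset.sum_coe_sort P η]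
          exact div_self hMpos.ne'
        · rw [hndef, ← Finset.sum_div]
          rw [Equiv.sum_comp eN.symm (fun i : ↥N => -η ↑i)]
          have : ∑ i : ↥N, -η ↑i = -∑ i ∈ N, η i := by
            rw [← Finset.sum_coe_sort N η, Finset.sum_neg_distrib]
          rw [this, hNsum, neg_neg]
          exact div_self hMpos.ne'
      have hgap := hGR _ _ a b m n hsx
      have hkey := key_sum p a b m n hsx.inj_a hsx.inj_b hsx.disj
      set f : Fin k → Fin k → ℝ := fun i j => negKer p (x i) (x j) * η i * η j with hfdef
      set ι : Fin P.card ⊕ Fin N.card → Fin k :=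
        Sum.elim (fun j => ((eP.symm j) : Fin k)) (fun i => ((eN.symm i) : Fin k)) with hιdef
      have step1 : (∑ i, ∑ j, f i j) = ∑ i ∈ P ∪ N, ∑ j ∈ P ∪ N, f i j := by
        have hinner : ∀ i, (∑ j, f i j) = ∑ j ∈ P ∪ N, f i j := fun i =>
          (Finset.sum_subset (Finset.subset_univ _)
            (fun j _ hj => by rw [hfdef]; dsimp only; rw [hz j hj]; ring)).symm
        calc (∑ i, ∑ j, f i j) = ∑ i, ∑ j ∈ P ∪ N, f i j :=
              Finset.sum_congr rfl fun i _ => hinner i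
          _ = ∑ i ∈ P ∪ N, ∑ j ∈ P ∪ N, f i j :=
              (Finset.sum_subset (Finset.subset_univ _) (fun i _ hi =>
                Finset.sum_eq_zero fun j _ => by
                  rw [hfdef]; dsimp only; rw [hz i hi]; ring)).symm
      have hreindex : ∀ g : Fin k → ℝ, ∑ i ∈ P ∪ N, g i
          = (∑ j : Fin P.card, g ↑(eP.symm j)) + (∑ i : Fin N.card, g ↑(eN.symm i)) := by
        intro g
        rw [Finset.sum_union hPN, ← Finset.sum_coe_sort P g, ← Finset.sum_coe_sort N g,
          ← Equiv.sum_comp eP.symm (fun i : ↥P => g ↑i),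
          ← Equiv.sum_comp eN.symm (fun i : ↥N => g ↑i)]
      have step2 : (∑ i ∈ P ∪ N, ∑ j ∈ P ∪ N, f i j)
          = ∑ u : Fin P.card ⊕ Fin N.card, ∑ v : Fin P.card ⊕ Fin N.card, f (ι u) (ι v) := by
        rw [hreindex (fun i => ∑ j ∈ P ∪ N, f i j), Fintype.sum_sum_type]
        refine congrArg₂ (· + ·) ?_ ?_ <;>
          · refine Finset.sum_congr rfl fun u _ => ?_
            rw [hreindex (fun j => f _ j), Fintype.sum_sum_type]
            simp [hιdef]
      have step3 : ∀ u v, f (ι u) (ι v)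
          = M ^ 2 * (negKer p (Sum.elim a b u) (Sum.elim a b v)
              * Sum.elim m (fun i => -n i) u * Sum.elim m (fun i => -n i) v) := by
        have hMne : M ≠ 0 := hMpos.ne'
        have hη' : ∀ u, η (ι u) = M * Sum.elim m (fun i => -n i) u := by
          intro u
          match u with
          | Sum.inl j =>
            rw [hιdef]
            simp only [Sum.elim_inl, hmdef]
            field_simp
          | Sum.inr i =>
            rw [hιdef]
            simp only [Sum.elim_inr, hndef]
            field_simp
        have hx' : ∀ u, x (ι u) = Sum.elim a b u := by
          intro u
          match u with
          | Sum.inl j => rw [hιdef]; simp [hadef]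
          | Sum.inr i => rw [hιdef]; simp [hbdef]
        intro u v
        rw [hfdef]
        dsimp only
        rw [hη' u, hη' v, hx' u, hx' v]
        ring
      show (∑ i, ∑ j, f i j) ≤ 0
      rw [step1, step2]
      simp_rw [step3, ← Finset.mul_sum]
      rw [hkey]
      nlinarith [hgap, sq_nonneg M]
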